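/- Let m₁ and m₂ be two distinct minors of a generic matrix X. Then m₁ (as a polynomial) is reducible modulo m₂ with respect to an anti-diagonal (or diagonal) term order if and only if m₂ is contained in m₁, i.e., the row index set of m₂ is a subset of the row index set of m₁ and the column index set of m₂ is a subset of the column index set of m₁. -/
import Mathlib

open Finset

lemma key_lemma {m n r₁ r₂ : ℕ} {a₁ : Fin r₁ → Fin m} {b₁ : Fin r₁ → Fin n}
    {a₂ : Fin r₂ → Fin m} {c₂ : Fin r₂ → Fin n}
    (ha₁ : Function.Injective a₁) (hb₁ : Function.Injective b₁)
    (ha₂ : Function.Injective a₂) (hc₂ : Function.Injective c₂) :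
    (∃ σ : Equiv.Perm (Fin r₁),
        (∑ k : Fin r₂, Finsupp.single (a₂ k, c₂ k) 1 : (Fin m × Fin n) →₀ ℕ) ≤
          ∑ k : Fin r₁, Finsupp.single (a₁ k, b₁ (σ k)) 1) ↔
      Set.range a₂ ⊆ Set.range a₁ ∧ Set.range c₂ ⊆ Set.range b₁ := by
  classical
  constructor
  · rintro ⟨σ, h⟩
    have key : ∀ k : Fin r₂, ∃ l : Fin r₁, (a₁ l, b₁ (σ l)) = (a₂ k, c₂ k) := by
      intro k
      have h1 : (1 : ℕ) ≤ (∑ k' : Fin r₂,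
          (Finsupp.single (a₂ k', c₂ k') 1 : (Fin m × Fin n) →₀ ℕ)) (a₂ k, c₂ k) := by
        rw [Finsupp.finset_sum_apply]
        have := Finset.single_le_sum
          (f := fun k' => ((Finsupp.single (a₂ k', c₂ k') 1 : (Fin m × Fin n) →₀ ℕ))
            (a₂ k, c₂ k)) (fun _ _ => Nat.zero_le _) (mem_univ k)
        simpa using this
      have h2 := le_trans h1 (h (a₂ k, c₂ k))
      have h3 : (∑ l : Fin r₁,
          (Finsupp.single (a₁ l, b₁ (σ l)) 1 : (Fin m × Fin n) →₀ ℕ)) (a₂ k, c₂ k) ≠ 0 := by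
        omega
      rw [Finsupp.finset_sum_apply] at h3
      obtain ⟨l, _, hl⟩ := Finset.exists_ne_zero_of_sum_ne_zero h3
      refine ⟨l, ?_⟩
      by_contra hc
      rw [Finsupp.single_apply, if_neg hc] at hl
      exact hl rfl
    constructor
    · rintro _ ⟨k, rfl⟩
      obtain ⟨l, hl⟩ := key k
      exact ⟨l, (Prod.mk.injEq _ _ _ _).mp hl |>.1⟩
    · rintro _ ⟨k, rfl⟩
      obtain ⟨l, hl⟩ := key k
      exact ⟨σ l, (Prod.mk.injEq _ _ _ _).mp hl |>.2⟩
  · rintro ⟨h₁, h₂⟩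
    choose i hi using fun k => h₁ ⟨k, rfl⟩
    choose j hj using fun k => h₂ ⟨k, rfl⟩
    have hiinj : Function.Injective i := fun k k' hkk' => ha₂ (by rw [← hi, ← hi, hkk'])
    have hjinj : Function.Injective j := fun k k' hkk' => hc₂ (by rw [← hj, ← hj, hkk'])
    let e : {x // x ∈ Set.range i} ≃ {x // x ∈ Set.range j} :=
      (Equiv.ofInjective i hiinj).symm.trans (Equiv.ofInjective j hjinj)
    refine ⟨e.extendSubtype, ?_⟩
    have hσ : ∀ k, e.extendSubtype (i k) = j k := by
      intro k
      rw [Equiv.extendSubtype_apply_of_mem e (i k) ⟨k, rfl⟩]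
      simp [e, Equiv.ofInjective_symm_apply]
    calc (∑ k : Fin r₂, Finsupp.single (a₂ k, c₂ k) 1 : (Fin m × Fin n) →₀ ℕ)
        = ∑ k : Fin r₂, Finsupp.single (a₁ (i k), b₁ (e.extendSubtype (i k))) 1 := by
          refine Finset.sum_congr rfl fun k _ => by rw [hi, hσ, hj]
      _ = ∑ l ∈ Finset.univ.image i, Finsupp.single (a₁ l, b₁ (e.extendSubtype l)) 1 := by
          rw [Finset.sum_image (fun x _ y _ h => hiinj h)]
      _ ≤ ∑ l : Fin r₁, Finsupp.single (a₁ l, b₁ (e.extendSubtype l)) 1 :=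
          Finset.sum_le_sum_of_subset (Finset.subset_univ _)

/-- Let `m₁` (rows `a₁`, columns `b₁`) and `m₂` (rows `a₂`, columns `b₂`)
be two distinct minors of the generic matrix.  The terms of `m₁` are the monomials
`∏ₖ x_{a₁ k, b₁ (σ k)}` for permutations `σ`; the leading term of `m₂` w.r.t. an
anti-diagonal (resp. diagonal) term order is `∏ₖ x_{a₂ k, b₂ (rev k)}` (resp.
`∏ₖ x_{a₂ k, b₂ k}`), and divisibility of monomials is `≤` of exponent vectors.
Then `m₁` is reducible modulo `m₂` — some term of `m₁` is divisible by the leading term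
of `m₂` — iff `R(m₂) ⊆ R(m₁)` and `C(m₂) ⊆ C(m₁)`; this holds both for the
anti-diagonal and the diagonal term order. -/
theorem stmt_3 (m n r₁ r₂ : ℕ)
    (a₁ : Fin r₁ → Fin m) (b₁ : Fin r₁ → Fin n) (a₂ : Fin r₂ → Fin m) (b₂ : Fin r₂ → Fin n)
    (ha₁ : StrictMono a₁) (hb₁ : StrictMono b₁) (ha₂ : StrictMono a₂) (hb₂ : StrictMono b₂)
    (hne : ¬ (Set.range a₁ = Set.range a₂ ∧ Set.range b₁ = Set.range b₂)) :
    ((∃ σ : Equiv.Perm (Fin r₁),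
        (∑ k : Fin r₂, Finsupp.single (a₂ k, b₂ k.rev) 1 : (Fin m × Fin n) →₀ ℕ) ≤
          ∑ k : Fin r₁, Finsupp.single (a₁ k, b₁ (σ k)) 1) ↔
      Set.range a₂ ⊆ Set.range a₁ ∧ Set.range b₂ ⊆ Set.range b₁) ∧
    ((∃ σ : Equiv.Perm (Fin r₁),
        (∑ k : Fin r₂, Finsupp.single (a₂ k, b₂ k) 1 : (Fin m × Fin n) →₀ ℕ) ≤
          ∑ k : Fin r₁, Finsupp.single (a₁ k, b₁ (σ k)) 1) ↔
      Set.range a₂ ⊆ Set.range a₁ ∧ Set.range b₂ ⊆ Set.range b₁) := by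
  constructor
  · have hrev : Set.range (fun k : Fin r₂ => b₂ k.rev) = Set.range b₂ := by
      exact Fin.rev_involutive.surjective.range_comp b₂
    rw [← hrev]
    exact key_lemma ha₁.injective hb₁.injective ha₂.injective
      (hb₂.injective.comp Fin.rev_injective)
  · exact key_lemma ha₁.injective hb₁.injective ha₂.injective hb₂.injective
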